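/- Let ℓ ∈ ℕ and suppose g satisfies (A1). Then for all u ∈ 𝓗₀^ℓ the identity Σ_{n=⌈ℓ/2⌉}^∞ |((−Δ)^{ℓ/2}u)_n|² = Σ_{n=ℓ}^∞ [((−Δ)^ℓ g)_n / g_n]·|u_n|² + Σ_{k=0}^{ℓ−1} 𝓡_k^{(ℓ)}(g;u) holds. -/

import Mathlib

noncomputable section

open scoped ENNReal

namespace HRB

/-- discrete gradient `(∇u)_n = u_n - u_{n-1}` -/
def grad (u : ℤ → ℂ) : ℤ → ℂ := fun n => u n - u (n - 1)

/-- discrete divergence (forward difference) `(∂u)_n = u_{n+1} - u_n` -/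
def fdiff (u : ℤ → ℂ) : ℤ → ℂ := fun n => u (n + 1) - u n

/-- averaging operator `(Mu)_n = (u_n + u_{n+1})/2` -/
def avg (u : ℤ → ℂ) : ℤ → ℂ := fun n => (u n + u (n + 1)) / 2

/-- negative discrete Laplacian `((-Δ)u)_n = 2u_n - u_{n-1} - u_{n+1}` -/
def negLap (u : ℤ → ℂ) : ℤ → ℂ := fun n => 2 * u n - u (n - 1) - u (n + 1)

/-- `(-Δ)^{ℓ/2}`: equal to `(-Δ)^m` if `ℓ = 2m` and to `∇ ∘ (-Δ)^m` if `ℓ = 2m+1`. -/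
def halfPow (l : ℕ) (u : ℤ → ℂ) : ℤ → ℂ :=
  if l % 2 = 0 then negLap^[l / 2] u else grad (negLap^[l / 2] u)

def gradR (u : ℤ → ℝ) : ℤ → ℝ := fun n => u n - u (n - 1)

def fdiffR (u : ℤ → ℝ) : ℤ → ℝ := fun n => u (n + 1) - u n

def negLapR (u : ℤ → ℝ) : ℤ → ℝ := fun n => 2 * u n - u (n - 1) - u (n + 1)

/-- `u ∈ H^ℓ` -/
def memH (l : ℤ) (u : ℤ → ℂ) : Prop := ∀ n : ℤ, n < l → u n = 0

/-- `u ∈ 𝓗₀^ℓ`: compactly supported elements of `H^ℓ` -/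
def memH0 (l : ℤ) (u : ℤ → ℂ) : Prop :=
  memH l u ∧ ∃ N : ℤ, ∀ n : ℤ, N ≤ n → u n = 0

/-- real-valued sequences in `H^ℓ` -/
def memHR (l : ℤ) (g : ℤ → ℝ) : Prop := ∀ n : ℤ, n < l → g n = 0

/-- `Σ_{n=a}^∞ f(n)` (as an unordered real `tsum`) -/
def qsum (a : ℤ) (f : ℤ → ℝ) : ℝ := ∑' n : ℤ, if a ≤ n then f n else 0

/-- `Σ_{n=a}^∞ f(n)` as a sum in `ℝ≥0∞` (for nonnegative `f`) -/
def esum (a : ℤ) (f : ℤ → ℝ) : ℝ≥0∞ :=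
  ∑' n : ℤ, if a ≤ n then ENNReal.ofReal (f n) else 0

/-- `⌈ℓ/2⌉` -/
def ceilHalf (l : ℕ) : ℤ := (((l + 1) / 2 : ℕ) : ℤ)

/-- `Σ_{n=⌈ℓ/2⌉}^∞ |((-Δ)^{ℓ/2}u)_n|²` -/
def energy (l : ℕ) (u : ℤ → ℂ) : ℝ :=
  qsum (ceilHalf l) fun n => ‖halfPow l u n‖ ^ 2

def eenergy (l : ℕ) (u : ℤ → ℂ) : ℝ≥0∞ :=
  esum (ceilHalf l) fun n => ‖halfPow l u n‖ ^ 2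

/-- `Σ_{n=l}^∞ ρ_n |u_n|²` -/
def wsum (l : ℤ) (ρ : ℤ → ℝ) (u : ℤ → ℂ) : ℝ := qsum l fun n => ρ n * ‖u n‖ ^ 2

def ewsum (l : ℤ) (ρ : ℤ → ℝ) (u : ℤ → ℂ) : ℝ≥0∞ := esum l fun n => ρ n * ‖u n‖ ^ 2

/-- Assumption (A1) -/
def A1 (l : ℕ) (g : ℤ → ℝ) : Prop :=
  memHR l g ∧ ∀ k : ℕ, k < l → ∀ n : ℤ, (l : ℤ) - (k : ℤ) ≤ n → 0 < fdiffR^[k] g n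

/-- Assumption (A2) -/
def A2 (l : ℕ) (g : ℤ → ℝ) : Prop :=
  ∀ k : ℕ, 1 ≤ k → k < l → ∀ n : ℤ, (l : ℤ) + 1 - (k : ℤ) ≤ n →
    0 ≤ negLapR^[l - k] (fdiffR^[k] g) n

/-- Assumption (A2') -/
def A2' (l : ℕ) (g : ℤ → ℝ) : Prop := ∀ n : ℤ, (l : ℤ) ≤ n → 0 ≤ negLapR^[l] g n

/-- Asymptotic expansion (Exp_s):
`g_n = Σ_{j=0}^{2ℓ} α_j n^{ℓ-j-s} + O(n^{-ℓ-1-s})` as `n → ∞`, with `α_0 ≠ 0`. -/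
def ExpS (l : ℕ) (g : ℤ → ℝ) (s : ℝ) : Prop :=
  ∃ α : ℕ → ℝ, α 0 ≠ 0 ∧ ∃ C : ℝ, ∃ N : ℤ, ∀ n : ℤ, N ≤ n →
    |g n - ∑ j ∈ Finset.range (2 * l + 1), α j * (n : ℝ) ^ ((l : ℝ) - (j : ℝ) - s)| ≤
      C * (n : ℝ) ^ (-(l : ℝ) - 1 - s)

/-- the weight `ρ(g)_n = ((-Δ)^ℓ g)_n / g_n` -/
def rho (l : ℕ) (g : ℤ → ℝ) : ℤ → ℝ := fun n => negLapR^[l] g n / g n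

/-- the `n`-th term of the remainder `𝓡_k^{(ℓ)}(g;u)` -/
def remTerm (l k : ℕ) (g : ℤ → ℝ) (u : ℤ → ℂ) : ℤ → ℝ := fun n =>
  (if k + 1 = l then 1
    else negLapR^[l - 1 - k] (fdiffR^[k + 1] g) n / fdiffR^[k + 1] g n) *
  ‖(Real.sqrt (fdiffR^[k] g n / fdiffR^[k] g (n + 1)) : ℂ) * fdiff^[k] u (n + 1) -
    (Real.sqrt (fdiffR^[k] g (n + 1) / fdiffR^[k] g n) : ℂ) * fdiff^[k] u n‖ ^ 2

/-- the remainder `𝓡_k^{(ℓ)}(g;u)` -/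
def rem (l k : ℕ) (g : ℤ → ℝ) (u : ℤ → ℂ) : ℝ :=
  qsum ((l : ℤ) - (k : ℤ)) (remTerm l k g u)

def erem (l k : ℕ) (g : ℤ → ℝ) (u : ℤ → ℂ) : ℝ≥0∞ :=
  esum ((l : ℤ) - (k : ℤ)) (remTerm l k g u)

/-- `ρ` is a discrete Hardy–Rellich–Birman weight for the power `ℓ` -/
def IsHRBWeight (l : ℕ) (ρ : ℤ → ℝ) : Prop :=
  (∀ n : ℤ, (l : ℤ) ≤ n → 0 ≤ ρ n) ∧
  ∀ u : ℤ → ℂ, memH0 l u → wsum l ρ u ≤ energy l u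

/-- criticality of the weight `ρ` -/
def IsCritical (l : ℕ) (ρ : ℤ → ℝ) : Prop :=
  ∀ ρ' : ℤ → ℝ, (∀ n : ℤ, (l : ℤ) ≤ n → 0 ≤ ρ' n) →
    (∀ u : ℤ → ℂ, memH0 l u → wsum l ρ' u ≤ energy l u) →
    (∀ n : ℤ, (l : ℤ) ≤ n → ρ n ≤ ρ' n) →
    ∀ n : ℤ, (l : ℤ) ≤ n → ρ' n = ρ n

/-- optimality near infinity of the weight `ρ` -/
def IsOptNearInfinity (l : ℕ) (ρ : ℤ → ℝ) : Prop :=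
  ∀ M : ℤ, (l : ℤ) ≤ M → ∀ ε : ℝ, 0 < ε →
    ∃ u : ℤ → ℂ, memH0 M u ∧ energy l u < (1 + ε) * wsum l ρ u

/-- non-attainability of the weight `ρ` -/
def IsNonAttainable (l : ℕ) (ρ : ℤ → ℝ) : Prop :=
  ∀ u : ℤ → ℂ, memH l u → ewsum l ρ u ≠ ⊤ → eenergy l u = ewsum l ρ u →
    u = 0

/-- `g^{(ℓ)}_n = √n ∏_{j=1}^{ℓ-1} (n-j)` for `n ≥ 0`, zero for `n < 0` -/
def gseq (l : ℕ) : ℤ → ℝ := fun n =>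
  if n < 0 then 0 else Real.sqrt (n : ℝ) * ∏ j ∈ Finset.Icc 1 (l - 1), ((n : ℝ) - (j : ℝ))

/-- the optimal weight `ρ^{(ℓ)}` -/
def rhoSeq (l : ℕ) : ℤ → ℝ := rho l (gseq l)

/-- `g^{(ℓ)}(q)_n = n^q ∏_{j=1}^{ℓ-1}(n-j)` for `n ≥ 0`, zero for `n < 0` -/
def gq (l : ℕ) (q : ℝ) : ℤ → ℝ := fun n =>
  if n < 0 then 0 else (n : ℝ) ^ q * ∏ j ∈ Finset.Icc 1 (l - 1), ((n : ℝ) - (j : ℝ))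

/-- `h_n = n^{ℓ-1/2}` for `n ≥ 0`, zero for `n < 0` -/
def hseq (l : ℕ) : ℤ → ℝ := fun n =>
  if n < 0 then 0 else (n : ℝ) ^ ((l : ℝ) - 1 / 2)

/-- generalized binomial coefficient `C(ν,m) = ν(ν-1)⋯(ν-m+1)/m!` -/
def genBinom (ν : ℝ) (m : ℕ) : ℝ := (∏ i ∈ Finset.range m, (ν - (i : ℝ))) / (m.factorial : ℝ)

/-- (signed) Stirling numbers of the first kind `s(n,k)`, extended by `0` for `k ≤ 0` -/
def stirling1 (n : ℕ) (k : ℤ) : ℝ :=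
  if k ≤ 0 then 0
  else (-1 : ℝ) ^ (n + k.toNat) *
    ∑ t ∈ (Finset.Icc 1 (n - 1)).powersetCard (n - k.toNat), ∏ i ∈ t, (i : ℝ)

/-- `X_m^{(ℓ)} = Σ_{j=-ℓ}^{ℓ} C(2ℓ,ℓ+j)(-1)^j j^m`, with `X_0^{(ℓ)} = 0` -/
def Xcoef (l m : ℕ) : ℝ :=
  if m = 0 then 0
  else ∑ j ∈ Finset.Icc (-(l : ℤ)) (l : ℤ),
    (((2 * l).choose ((l : ℤ) + j).toNat : ℕ) : ℝ) * (-1 : ℝ) ^ j * ((j : ℝ)) ^ m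

/-- the coefficients `r_k^{(ℓ)}` -/
def rcoef (l k : ℕ) : ℝ :=
  ∑ m ∈ Finset.Icc (2 * l) k,
    genBinom ((l : ℝ) + (m : ℝ) - (k : ℝ) - 1 / 2) m * stirling1 l ((l : ℤ) + (m : ℤ) - (k : ℤ)) *
      Xcoef l m

/-- Pochhammer symbol `(x)_ℓ = x(x+1)⋯(x+ℓ-1)` -/
def poch (x : ℝ) (l : ℕ) : ℝ := ∏ i ∈ Finset.range l, (x + (i : ℝ))


-- ============ auxiliary lemmas ============

lemma qsum_congr' {a b : ℤ} (hab : a = b) {f f' : ℤ → ℝ} (h : ∀ n, f n = f' n) :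
    qsum a f = qsum b f' := by
  subst hab; exact congrArg _ (funext h)

lemma qsum_shift (a : ℤ) (f : ℤ → ℝ) : qsum (a + 1) f = qsum a (fun n => f (n + 1)) := by
  unfold qsum
  rw [← (Equiv.addRight (1 : ℤ)).tsum_eq (fun n => if a + 1 ≤ n then f n else 0)]
  refine tsum_congr fun n => ?_
  simp only [Equiv.coe_addRight]
  by_cases h : a ≤ n
  · rw [if_pos h]; exact if_pos (by omega)
  · rw [if_neg h]; exact if_neg (by omega)

lemma qsum_eq_sum {a N : ℤ} {f : ℤ → ℝ} (h : ∀ n, N < n → f n = 0) :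
    qsum a f = ∑ n ∈ Finset.Icc a N, f n := by
  unfold qsum
  rw [tsum_eq_sum (s := Finset.Icc a N) ?_]
  · exact Finset.sum_congr rfl fun n hn => if_pos (Finset.mem_Icc.mp hn).1
  · intro n hn
    rw [Finset.mem_Icc] at hn
    by_cases h1 : a ≤ n
    · rw [if_pos h1]; exact h n (by omega)
    · rw [if_neg h1]

lemma negLapR_fdiffR (g : ℤ → ℝ) : negLapR (fdiffR g) = fdiffR (negLapR g) := by
  funext n
  simp only [negLapR, fdiffR]
  rw [show n - 1 + 1 = n from by ring, show n + 1 - 1 = n from by ring]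
  ring

lemma negLapR_iter_fdiffR (m : ℕ) (g : ℤ → ℝ) :
    negLapR^[m] (fdiffR g) = fdiffR (negLapR^[m] g) := by
  induction m with
  | zero => simp
  | succ m ih =>
      rw [Function.iterate_succ_apply', ih, negLapR_fdiffR, Function.iterate_succ_apply' negLapR m g]

lemma negLap_fdiff (u : ℤ → ℂ) : negLap (fdiff u) = fdiff (negLap u) := by
  funext n
  simp only [negLap, fdiff]
  rw [show n - 1 + 1 = n from by ring, show n + 1 - 1 = n from by ring]
  ring

lemma negLap_iter_fdiff (m : ℕ) (u : ℤ → ℂ) :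
    negLap^[m] (fdiff u) = fdiff (negLap^[m] u) := by
  induction m with
  | zero => simp
  | succ m ih =>
      rw [Function.iterate_succ_apply', ih, negLap_fdiff, Function.iterate_succ_apply' negLap m u]

lemma fdiff_eq_grad_succ (u : ℤ → ℂ) (n : ℤ) : fdiff u n = grad u (n + 1) := by
  simp only [fdiff, grad]
  rw [show n + 1 - 1 = n from by ring]

lemma grad_fdiff (u : ℤ → ℂ) (n : ℤ) : grad (fdiff u) n = -negLap u n := by
  simp only [grad, fdiff, negLap]
  rw [show n - 1 + 1 = n from by ring]
  ring

lemma fdiff_iter_negLapR (m : ℕ) (g : ℤ → ℝ) (n : ℤ) :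
    negLapR^[m] (fdiffR g) (n - 1) - negLapR^[m] (fdiffR g) n = negLapR^[m + 1] g n := by
  rw [negLapR_iter_fdiffR, Function.iterate_succ_apply']
  simp only [fdiffR, negLapR]
  rw [show n - 1 + 1 = n from by ring]
  ring

lemma norm_sq_expand (a b : ℝ) (ha : 0 < a) (hb : 0 < b) (x y : ℂ) :
    ‖y - x‖ ^ 2 - ‖((Real.sqrt (a / b) : ℝ) : ℂ) * y - ((Real.sqrt (b / a) : ℝ) : ℂ) * x‖ ^ 2
      = (1 - a / b) * ‖y‖ ^ 2 + (1 - b / a) * ‖x‖ ^ 2 := by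
  have hnorm : ∀ z : ℂ, ‖z‖ ^ 2 = Complex.normSq z := fun z => by
    rw [Complex.sq_norm]
  have hab : Real.sqrt (a / b) * Real.sqrt (b / a) = 1 := by
    rw [← Real.sqrt_mul (by positivity), show a / b * (b / a) = 1 from by field_simp,
      Real.sqrt_one]
  simp only [hnorm, Complex.normSq_sub, Complex.normSq_mul, Complex.normSq_ofReal]
  rw [Real.mul_self_sqrt (by positivity), Real.mul_self_sqrt (by positivity)]
  have hcross : (((Real.sqrt (a / b) : ℝ) : ℂ) * y *
      (starRingEnd ℂ) (((Real.sqrt (b / a) : ℝ) : ℂ) * x)).re = (y * (starRingEnd ℂ) x).re := by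
    rw [map_mul, Complex.conj_ofReal,
      show ((Real.sqrt (a / b) : ℝ) : ℂ) * y * (((Real.sqrt (b / a) : ℝ) : ℂ) * (starRingEnd ℂ) x)
        = ((Real.sqrt (a / b) * Real.sqrt (b / a) : ℝ) : ℂ) * (y * (starRingEnd ℂ) x) from by
        push_cast; ring, hab]
    simp
  rw [hcross]
  ring


lemma lemmaA (l : ℕ) (g : ℤ → ℝ)
    (hg0 : ∀ n : ℤ, n < (l : ℤ) → g n = 0)
    (hgpos : ∀ n : ℤ, (l : ℤ) ≤ n → 0 < g n)
    (w : ℤ → ℝ)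
    (hw : ∀ n : ℤ, (l : ℤ) ≤ n →
      w (n - 1) * (g n - g (n - 1)) + w n * (g n - g (n + 1)) = negLapR^[l] g n)
    (u : ℤ → ℂ) (hu0 : ∀ n : ℤ, n < (l : ℤ) → u n = 0)
    (N : ℤ) (hN : (l : ℤ) ≤ N) (huN : ∀ n : ℤ, N ≤ n → u n = 0) :
    qsum ((l : ℤ) - 1) (fun n => w n * ‖fdiff u n‖ ^ 2)
      = wsum l (rho l g) u
        + qsum l (fun n => w n * ‖((Real.sqrt (g n / g (n + 1)) : ℝ) : ℂ) * u (n + 1)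
            - ((Real.sqrt (g (n + 1) / g n) : ℝ) : ℂ) * u n‖ ^ 2) := by
  set L : ℤ := (l : ℤ) with hLdef
  set T : ℤ → ℝ := fun n => w n * ‖((Real.sqrt (g n / g (n + 1)) : ℝ) : ℂ) * u (n + 1)
            - ((Real.sqrt (g (n + 1) / g n) : ℝ) : ℂ) * u n‖ ^ 2 with hT
  set A : ℤ → ℝ := fun n => w n * ((g (n + 1) - g n) / g (n + 1)) * ‖u (n + 1)‖ ^ 2 with hA
  set B : ℤ → ℝ := fun n => w n * ((g n - g (n + 1)) / g n) * ‖u n‖ ^ 2 with hB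
  have hins : Finset.Icc (L - 1) N = insert (L - 1) (Finset.Icc L N) := by
    ext x; simp only [Finset.mem_Icc, Finset.mem_insert]; omega
  have hnotmem : L - 1 ∉ Finset.Icc L N := by
    simp only [Finset.mem_Icc]; omega
  have hTL1 : T (L - 1) = 0 := by
    simp [hT, hg0 (L - 1) (by omega), hu0 (L - 1) (by omega)]
  have hBL1 : B (L - 1) = 0 := by
    simp [hB, hu0 (L - 1) (by omega)]
  have hAN : A N = 0 := by
    simp [hA, huN (N + 1) (by omega)]
  have h1 : qsum (L - 1) (fun n => w n * ‖fdiff u n‖ ^ 2)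
      = ∑ n ∈ Finset.Icc (L - 1) N, w n * ‖fdiff u n‖ ^ 2 :=
    qsum_eq_sum (fun n hn => by
      simp [fdiff, huN n (by omega), huN (n + 1) (by omega)])
  have h2 : wsum l (rho l g) u = ∑ n ∈ Finset.Icc L N, rho l g n * ‖u n‖ ^ 2 := by
    unfold wsum
    exact qsum_eq_sum (fun n hn => by simp [huN n (by omega)])
  have h3 : qsum L T = ∑ n ∈ Finset.Icc L N, T n :=
    qsum_eq_sum (fun n hn => by
      simp [hT, huN n (by omega), huN (n + 1) (by omega)])
  rw [h1, h2, h3]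
  have key : ∀ n ∈ Finset.Icc (L - 1) N,
      w n * ‖fdiff u n‖ ^ 2 = T n + (A n + B n) := by
    intro n hn
    rw [Finset.mem_Icc] at hn
    rcases eq_or_lt_of_le hn.1 with heq | hlt
    · -- n = L - 1
      have hgn : g n = 0 := hg0 n (by omega)
      have hun : u n = 0 := hu0 n (by omega)
      have hgn1 : 0 < g (n + 1) := hgpos (n + 1) (by omega)
      simp [hT, hA, hB, fdiff, hgn, hun, div_self hgn1.ne']
    · -- L ≤ n
      have hgn : 0 < g n := hgpos n (by omega)
      have hgn1 : 0 < g (n + 1) := hgpos (n + 1) (by omega)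
      have hexp := norm_sq_expand (g n) (g (n + 1)) hgn hgn1 (u n) (u (n + 1))
      have e1 : (g (n + 1) - g n) / g (n + 1) = 1 - g n / g (n + 1) := by
        rw [sub_div, div_self hgn1.ne']
      have e2 : (g n - g (n + 1)) / g n = 1 - g (n + 1) / g n := by
        rw [sub_div, div_self hgn.ne']
      simp only [hT, hA, hB, fdiff, e1, e2]
      linear_combination w n * hexp
  rw [Finset.sum_congr rfl key]
  have hshift : ∑ n ∈ Finset.Icc (L - 1) N, A n = ∑ n ∈ Finset.Icc L N, A (n - 1) := by
    have h4 : Finset.Icc (L - 1) N = insert N (Finset.Icc (L - 1) (N - 1)) := by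
      ext x; simp only [Finset.mem_Icc, Finset.mem_insert]; omega
    rw [h4, Finset.sum_insert (by simp only [Finset.mem_Icc]; omega), hAN, zero_add]
    rw [show Finset.Icc L N = Finset.map (addRightEmbedding 1) (Finset.Icc (L - 1) (N - 1))
      from by rw [Finset.map_add_right_Icc]; congr 1 <;> ring]
    rw [Finset.sum_map]
    refine Finset.sum_congr rfl fun x _ => ?_
    simp only [addRightEmbedding_apply]
    rw [show x + 1 - 1 = x from by ring]
  have final : ∀ n ∈ Finset.Icc L N, A (n - 1) + B n = rho l g n * ‖u n‖ ^ 2 := by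
    intro n hn
    rw [Finset.mem_Icc] at hn
    simp only [hA, hB, rho]
    rw [show n - 1 + 1 = n from by ring, ← hw n hn.1]
    ring
  calc ∑ n ∈ Finset.Icc (L - 1) N, (T n + (A n + B n))
      = (∑ n ∈ Finset.Icc (L - 1) N, T n)
        + ((∑ n ∈ Finset.Icc (L - 1) N, A n) + (∑ n ∈ Finset.Icc (L - 1) N, B n)) := by
        rw [Finset.sum_add_distrib, Finset.sum_add_distrib]
    _ = (∑ n ∈ Finset.Icc L N, T n)
        + ((∑ n ∈ Finset.Icc L N, A (n - 1)) + (∑ n ∈ Finset.Icc L N, B n)) := by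
        rw [hshift]
        congr 1
        · rw [hins, Finset.sum_insert hnotmem, hTL1, zero_add]
        · congr 1
          rw [hins, Finset.sum_insert hnotmem, hBL1, zero_add]
    _ = (∑ n ∈ Finset.Icc L N, T n) + ∑ n ∈ Finset.Icc L N, rho l g n * ‖u n‖ ^ 2 := by
        rw [← Finset.sum_add_distrib]
        exact congrArg _ (Finset.sum_congr rfl final)
    _ = (∑ n ∈ Finset.Icc L N, rho l g n * ‖u n‖ ^ 2) + ∑ n ∈ Finset.Icc L N, T n := by
        ring

lemma energy_one (u : ℤ → ℂ) :
    energy 1 u = qsum 0 (fun n => ‖fdiff u n‖ ^ 2) := by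
  unfold energy halfPow ceilHalf
  norm_num
  rw [show (1 : ℤ) = 0 + 1 from rfl, qsum_shift]
  exact congrArg _ (funext fun n => by rw [← fdiff_eq_grad_succ])

lemma energy_succ (l : ℕ) (hl : 1 ≤ l) (u : ℤ → ℂ) :
    energy (l + 1) u = energy l (fdiff u) := by
  unfold energy halfPow ceilHalf
  rcases Nat.even_or_odd l with ⟨m, hm⟩ | ⟨m, hm⟩
  · -- l = 2m, m ≥ 1; l+1 odd
    have hm1 : 1 ≤ m := by omega
    rw [if_neg (by omega), if_pos (by omega)]
    rw [show (l + 1) / 2 = m from by omega, show l / 2 = m from by omega,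
      show (l + 1 + 1) / 2 = m + 1 from by omega]
    rw [negLap_iter_fdiff]
    push_cast
    rw [qsum_shift]
    exact congrArg _ (funext fun n => by rw [← fdiff_eq_grad_succ])
  · -- l = 2m+1; l+1 even
    rw [if_pos (by omega), if_neg (by omega)]
    rw [show (l + 1) / 2 = m + 1 from by omega, show l / 2 = m from by omega,
      show (l + 1 + 1) / 2 = m + 1 from by omega]
    refine congrArg _ (funext fun n => ?_)
    rw [negLap_iter_fdiff, grad_fdiff, norm_neg, ← Function.iterate_succ_apply' negLap m u]

lemma main : ∀ l : ℕ, 1 ≤ l → ∀ g : ℤ → ℝ, A1 l g → ∀ u : ℤ → ℂ, memH0 l u →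
    energy l u = wsum l (rho l g) u + ∑ k ∈ Finset.range l, rem l k g u := by
  intro l hl
  induction l, hl using Nat.le_induction with
  | base =>
    intro g hA1 u hu
    obtain ⟨hu0, N0, huN0⟩ := hu
    have hN : (1 : ℤ) ≤ max N0 1 := le_max_right _ _
    have huN : ∀ n : ℤ, max N0 1 ≤ n → u n = 0 := fun n hn =>
      huN0 n (le_trans (le_max_left _ _) hn)
    have hg0 : ∀ n : ℤ, n < ((1 : ℕ) : ℤ) → g n = 0 := fun n hn => hA1.1 n hn
    have hgpos : ∀ n : ℤ, ((1 : ℕ) : ℤ) ≤ n → 0 < g n := by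
      intro n hn
      have := hA1.2 0 (by omega) n (by push_cast at hn ⊢; omega)
      simpa using this
    have hw : ∀ n : ℤ, ((1 : ℕ) : ℤ) ≤ n →
        (fun _ : ℤ => (1 : ℝ)) (n - 1) * (g n - g (n - 1))
          + (fun _ : ℤ => (1 : ℝ)) n * (g n - g (n + 1)) = negLapR^[1] g n := by
      intro n _
      simp only [Function.iterate_one, negLapR, one_mul]
      ring
    have hA := lemmaA 1 g hg0 hgpos (fun _ => 1) hw u
      (fun n hn => hu0 n hn) (max N0 1) hN huN
    rw [energy_one u, Finset.sum_range_one]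
    rw [show qsum 0 (fun n => ‖fdiff u n‖ ^ 2)
        = qsum (((1 : ℕ) : ℤ) - 1) (fun n => (fun _ : ℤ => (1 : ℝ)) n * ‖fdiff u n‖ ^ 2)
      from qsum_congr' (by norm_num) (fun n => by norm_num), hA]
    congr 1
  | succ l hl ih =>
    intro g hA1 u hu
    obtain ⟨hu0, N0, huN0⟩ := hu
    have hN : ((l : ℤ) + 1) ≤ max N0 ((l : ℤ) + 1) := le_max_right _ _
    have huN : ∀ n : ℤ, max N0 ((l : ℤ) + 1) ≤ n → u n = 0 := fun n hn =>
      huN0 n (le_trans (le_max_left _ _) hn)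
    have hg0 : ∀ n : ℤ, n < (((l + 1 : ℕ)) : ℤ) → g n = 0 := fun n hn => hA1.1 n hn
    have hgpos : ∀ n : ℤ, (((l + 1 : ℕ)) : ℤ) ≤ n → 0 < g n := by
      intro n hn
      have := hA1.2 0 (by omega) n (by push_cast at hn ⊢; omega)
      simpa using this
    have hdgpos : ∀ n : ℤ, (l : ℤ) ≤ n → 0 < fdiffR g n := by
      intro n hn
      have := hA1.2 1 (by omega) n (by push_cast; omega)
      simpa using this
    have hA1' : A1 l (fdiffR g) := by
      constructor
      · intro n hn
        have e1 : g n = 0 := hA1.1 n (by push_cast at hn ⊢; omega)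
        have e2 : g (n + 1) = 0 := hA1.1 (n + 1) (by push_cast at hn ⊢; omega)
        simp [fdiffR, e1, e2]
      · intro k hk n hn
        have := hA1.2 (k + 1) (by omega) n (by push_cast at hn ⊢; omega)
        rwa [Function.iterate_succ_apply] at this
    have hu' : memH0 l (fdiff u) := by
      refine ⟨fun n hn => ?_, ⟨N0, fun n hn => ?_⟩⟩
      · have e1 : u n = 0 := hu0 n (by push_cast at hn ⊢; omega)
        have e2 : u (n + 1) = 0 := hu0 (n + 1) (by push_cast at hn ⊢; omega)
        simp [fdiff, e1, e2]
      · simp [fdiff, huN0 n hn, huN0 (n + 1) (by omega)]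
    have IH := ih (fdiffR g) hA1' (fdiff u) hu'
    rw [energy_succ l hl u, IH]
    -- weight for lemmaA
    set w : ℤ → ℝ := fun n => negLapR^[l] (fdiffR g) n / fdiffR g n with hwdef
    have hw : ∀ n : ℤ, (((l + 1 : ℕ)) : ℤ) ≤ n →
        w (n - 1) * (g n - g (n - 1)) + w n * (g n - g (n + 1)) = negLapR^[l + 1] g n := by
      intro n hn
      push_cast at hn
      have h1 : fdiffR g (n - 1) ≠ 0 := (hdgpos (n - 1) (by omega)).ne'
      have h2 : fdiffR g n ≠ 0 := (hdgpos n (by omega)).ne'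
      have e1 : g n - g (n - 1) = fdiffR g (n - 1) := by
        simp only [fdiffR]
        rw [show n - 1 + 1 = n from by ring]
      have e2 : g n - g (n + 1) = -fdiffR g n := by
        simp only [fdiffR]; ring
      simp only [hwdef]
      rw [e1, e2, div_mul_cancel₀ _ h1]
      rw [show negLapR^[l] (fdiffR g) n / fdiffR g n * -fdiffR g n
          = -negLapR^[l] (fdiffR g) n from by field_simp]
      linear_combination fdiff_iter_negLapR l g n
    have hA := lemmaA (l + 1) g hg0 hgpos w hw u hu0 (max N0 ((l : ℤ) + 1))
      (by push_cast; exact hN) huN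
    -- identify LHS of hA with wsum l (rho l (fdiffR g)) (fdiff u)
    have hlhs : wsum (l : ℤ) (rho l (fdiffR g)) (fdiff u)
        = qsum (((l + 1 : ℕ) : ℤ) - 1) (fun n => w n * ‖fdiff u n‖ ^ 2) := by
      unfold wsum
      exact qsum_congr' (by push_cast; ring) fun n => rfl
    -- identify remainder of hA with rem (l+1) 0 g u
    have hrem0 : rem (l + 1) 0 g u
        = qsum ((l + 1 : ℕ) : ℤ) (fun n => w n * ‖((Real.sqrt (g n / g (n + 1)) : ℝ) : ℂ) * u (n + 1)
            - ((Real.sqrt (g (n + 1) / g n) : ℝ) : ℂ) * u n‖ ^ 2) := by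
      unfold rem
      refine qsum_congr' (by push_cast; ring) fun n => ?_
      unfold remTerm
      rw [if_neg (by omega)]
      simp only [hwdef, zero_add, Function.iterate_one, Function.iterate_zero, id_eq,
        Nat.add_sub_cancel, Nat.sub_zero]
    -- identify shifted remainders
    have hrem : ∀ k ∈ Finset.range l, rem l k (fdiffR g) (fdiff u) = rem (l + 1) (k + 1) g u := by
      intro k hk
      unfold rem
      refine qsum_congr' (by push_cast; ring) fun n => ?_
      unfold remTerm
      rw [show fdiffR^[k + 1 + 1] g = fdiffR^[k + 1] (fdiffR g) from
          Function.iterate_succ_apply fdiffR (k + 1) g,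
        show fdiffR^[k + 1] g = fdiffR^[k] (fdiffR g) from
          Function.iterate_succ_apply fdiffR k g,
        show fdiff^[k + 1] u = fdiff^[k] (fdiff u) from
          Function.iterate_succ_apply fdiff k u,
        show l + 1 - 1 - (k + 1) = l - 1 - k from by omega]
      congr 1
      exact if_congr (by omega) rfl rfl
    rw [hlhs, hA, Finset.sum_congr rfl hrem, ← hrem0,
      Finset.sum_range_succ' (fun k => rem (l + 1) k g u) l]
    ring


/-- Theorem 1: the Hardy–Rellich–Birman identity with explicit remainders. -/
theorem statement1 (l : ℕ) (hl : 1 ≤ l) (g : ℤ → ℝ) (hA1 : A1 l g)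
    (u : ℤ → ℂ) (hu : memH0 l u) :
    energy l u = wsum l (rho l g) u + ∑ k ∈ Finset.range l, rem l k g u :=
  main l hl g hA1 u hu

end HRB
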